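/- Let (H,R,χ) be a Cartier triangular Hopf algebra. Then τ(S⊗S)(χ) = χ, i.e. writing χ = χⁱ⊗χᵢ one has S(χᵢ)⊗S(χⁱ) = χⁱ⊗χᵢ. -/

import Mathlib

open scoped TensorProduct

noncomputable section

variable (k H : Type*) [CommRing k] [Ring H] [HopfAlgebra k H]

/-- leg embedding `a ⊗ b ↦ a ⊗ b ⊗ 1` into `H ⊗ (H ⊗ H)`. -/
def leg12 : H ⊗[k] H →ₐ[k] H ⊗[k] (H ⊗[k] H) :=
  Algebra.TensorProduct.map (AlgHom.id k H) Algebra.TensorProduct.includeLeft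

/-- leg embedding `a ⊗ b ↦ 1 ⊗ a ⊗ b`. -/
def leg23 : H ⊗[k] H →ₐ[k] H ⊗[k] (H ⊗[k] H) :=
  Algebra.TensorProduct.includeRight

/-- leg embedding `a ⊗ b ↦ a ⊗ 1 ⊗ b`. -/
def leg13 : H ⊗[k] H →ₐ[k] H ⊗[k] (H ⊗[k] H) :=
  Algebra.TensorProduct.map (AlgHom.id k H) Algebra.TensorProduct.includeRight

/-- `(Id ⊗ Δ)` as an algebra map `H ⊗ H → H ⊗ (H ⊗ H)`. -/
def idComul : H ⊗[k] H →ₐ[k] H ⊗[k] (H ⊗[k] H) :=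
  Algebra.TensorProduct.map (AlgHom.id k H) (Bialgebra.comulAlgHom k H)

/-- `(Δ ⊗ Id)` as an algebra map `H ⊗ H → H ⊗ (H ⊗ H)` (after reassociation). -/
def comulId : H ⊗[k] H →ₐ[k] H ⊗[k] (H ⊗[k] H) :=
  (Algebra.TensorProduct.assoc k k k H H H).toAlgHom.comp
    (Algebra.TensorProduct.map (Bialgebra.comulAlgHom k H) (AlgHom.id k H))

/-- the flip `a ⊗ b ↦ b ⊗ a` as an algebra map. -/
def swapT : H ⊗[k] H →ₐ[k] H ⊗[k] H := (Algebra.TensorProduct.comm k H H).toAlgHom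

/-- A quasitriangular structure on the bialgebra `H`. -/
structure QT where
  R : H ⊗[k] H
  Rinv : H ⊗[k] H
  mul_inv : R * Rinv = 1
  inv_mul : Rinv * R = 1
  quasi_cocomm : ∀ h : H, swapT k H (Coalgebra.comul (R := k) h) * R = R * Coalgebra.comul (R := k) h
  hex1 : idComul k H R = leg13 k H R * leg12 k H R
  hex2 : comulId k H R = leg13 k H R * leg23 k H R

/-- A pre-Cartier quasitriangular bialgebra structure on `H`. -/
structure PreCartier extends QT k H where
  χ : H ⊗[k] H
  chi_comm : ∀ h : H, χ * Coalgebra.comul (R := k) h = Coalgebra.comul (R := k) h * χ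
  chi_hex1 : idComul k H χ = leg12 k H χ + leg12 k H Rinv * leg13 k H χ * leg12 k H R
  chi_hex2 : comulId k H χ = leg23 k H χ + leg23 k H Rinv * leg13 k H χ * leg23 k H R


set_option maxHeartbeats 1000000
set_option synthInstance.maxHeartbeats 200000

open TensorProduct LinearMap

namespace CartierAux

local notation "μ" => LinearMap.mul' k H
local notation "Δ" => (Coalgebra.comul : H →ₗ[k] H ⊗[k] H)
local notation "Sₐ" => (HopfAlgebra.antipode k : H →ₗ[k] H)
local notation "ε" => (Coalgebra.counit : H →ₗ[k] k)

def ttc : ((H ⊗[k] H) ⊗[k] (H ⊗[k] H)) →ₗ[k] ((H ⊗[k] H) ⊗[k] (H ⊗[k] H)) :=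
  (TensorProduct.tensorTensorTensorComm k H H H H).toLinearMap

@[simp] lemma ttc_tmul (a b c d : H) :
    ttc k H ((a ⊗ₜ[k] b) ⊗ₜ[k] (c ⊗ₜ[k] d)) = (a ⊗ₜ[k] c) ⊗ₜ[k] (b ⊗ₜ[k] d) := rfl

def comul2 : (H ⊗[k] H) →ₗ[k] ((H ⊗[k] H) ⊗[k] (H ⊗[k] H)) :=
  ttc k H ∘ₗ TensorProduct.map Δ Δ

lemma comul2_tmul (a b : H) :
    comul2 k H (a ⊗ₜ[k] b) = ttc k H ((Δ a) ⊗ₜ[k] (Δ b)) := rfl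

def conv (f g : (H ⊗[k] H) →ₗ[k] H) : (H ⊗[k] H) →ₗ[k] H :=
  μ ∘ₗ TensorProduct.map f g ∘ₗ comul2 k H

def ueps : (H ⊗[k] H) →ₗ[k] H := Algebra.linearMap k H ∘ₗ ε ∘ₗ μ

lemma ueps_tmul (a b : H) : ueps k H (a ⊗ₜ[k] b) = Coalgebra.counit (R := k) (a * b) • 1 := by
  simp [ueps, Algebra.algebraMap_eq_smul_one]

/- mul of two elements of H⊗H via map μ μ ∘ ttc -/
lemma mapmul_ttc (u v : H ⊗[k] H) :
    TensorProduct.map μ μ (ttc k H (u ⊗ₜ[k] v)) = u * v := by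
  induction u with
  | zero => simp [Algebra.TensorProduct.one_def]
  | tmul a b =>
    induction v with
    | zero => simp
    | tmul c d => simp [Algebra.TensorProduct.tmul_mul_tmul]
    | add x y hx hy => simp only [tmul_add, map_add, hx, hy, mul_add]
  | add x y hx hy => simp only [add_tmul, map_add, hx, hy, add_mul]

/-- C1 : conv (S∘μ) μ = uε -/
lemma conv_SmulS_mul : conv k H (Sₐ ∘ₗ μ) μ = ueps k H := by
  apply TensorProduct.ext'
  intro a b
  have h1 : TensorProduct.map (Sₐ ∘ₗ μ) μ
      = ((HopfAlgebra.antipode k : H →ₗ[k] H).rTensor H) ∘ₗ TensorProduct.map μ μ := by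
    apply TensorProduct.ext'
    intro u v
    simp [LinearMap.rTensor_tmul]
  have h2 : TensorProduct.map μ μ (ttc k H ((Δ a) ⊗ₜ[k] (Δ b))) = Δ (a * b) := by
    rw [mapmul_ttc]
    exact ((Bialgebra.comulAlgHom k H).map_mul a b).symm
  simp only [conv, LinearMap.comp_apply, comul2_tmul, h1, h2]
  rw [HopfAlgebra.mul_antipode_rTensor_comul_apply]
  simp [ueps, Algebra.algebraMap_eq_smul_one]

/-- the "reversed antipode-squared" candidate: a⊗b ↦ S(b)*S(a) -/
def Grev : (H ⊗[k] H) →ₗ[k] H :=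
  μ ∘ₗ TensorProduct.map Sₐ Sₐ ∘ₗ (TensorProduct.comm k H H).toLinearMap

@[simp] lemma Grev_tmul (a b : H) : Grev k H (a ⊗ₜ[k] b) = Sₐ b * Sₐ a := rfl

def qmap : ((H ⊗[k] H) ⊗[k] H) →ₗ[k] H :=
  μ ∘ₗ ((μ ∘ₗ ((HopfAlgebra.antipode k : H →ₗ[k] H).lTensor H)
      ∘ₗ (TensorProduct.comm k H H).toLinearMap).lTensor H)
    ∘ₗ (TensorProduct.assoc k H H H).toLinearMap

@[simp] lemma qmap_tmul (x y c : H) :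
    qmap k H ((x ⊗ₜ[k] y) ⊗ₜ[k] c) = x * (c * Sₐ y) := by
  simp [qmap]

lemma aux_convmulG (u v : H ⊗[k] H) :
    μ (TensorProduct.map μ (Grev k H) (ttc k H (u ⊗ₜ[k] v)))
      = qmap k H (u ⊗ₜ[k] (μ ((HopfAlgebra.antipode k : H →ₗ[k] H).lTensor H v))) := by
  induction u with
  | zero => simp
  | tmul x y =>
    induction v with
    | zero => simp
    | tmul z w => simp [mul_assoc]
    | add s t hs ht => simp only [tmul_add, map_add, hs, ht]
  | add s t hs ht => simp only [add_tmul, map_add, hs, ht]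

lemma qmap_one (u : H ⊗[k] H) :
    qmap k H (u ⊗ₜ[k] (1:H)) = μ ((HopfAlgebra.antipode k : H →ₗ[k] H).lTensor H u) := by
  induction u with
  | zero => simp
  | tmul x y => simp
  | add s t hs ht => simp only [add_tmul, map_add, hs, ht]

/-- C2 : conv μ Grev = uε -/
lemma conv_mul_Grev : conv k H μ (Grev k H) = ueps k H := by
  apply TensorProduct.ext'
  intro a b
  simp only [conv, LinearMap.comp_apply, comul2_tmul]
  rw [aux_convmulG, HopfAlgebra.mul_antipode_lTensor_comul_apply]
  rw [Algebra.algebraMap_eq_smul_one, tmul_smul, map_smul, qmap_one,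
    HopfAlgebra.mul_antipode_lTensor_comul_apply]
  have : Coalgebra.counit (R := k) (a * b)
      = Coalgebra.counit (R := k) a * Coalgebra.counit (R := k) b :=
    map_mul (Bialgebra.counitAlgHom k H) a b
  rw [ueps_tmul, this]
  simp [Algebra.algebraMap_eq_smul_one, smul_smul, mul_comm]

def Xr : (H ⊗[k] H) →ₗ[k] H :=
  (TensorProduct.rid k H).toLinearMap ∘ₗ (Coalgebra.counit : H →ₗ[k] k).lTensor H

def Xl : (H ⊗[k] H) →ₗ[k] H :=
  (TensorProduct.lid k H).toLinearMap ∘ₗ (Coalgebra.counit : H →ₗ[k] k).rTensor H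

@[simp] lemma Xr_tmul (x y : H) : Xr k H (x ⊗ₜ[k] y) = Coalgebra.counit (R := k) y • x := by
  simp [Xr]

@[simp] lemma Xl_tmul (x y : H) : Xl k H (x ⊗ₜ[k] y) = Coalgebra.counit (R := k) x • y := by
  simp [Xl]

lemma counit_mul' (x y : H) : Coalgebra.counit (R := k) (x * y)
    = Coalgebra.counit (R := k) x * Coalgebra.counit (R := k) y :=
  map_mul (Bialgebra.counitAlgHom k H) x y

lemma aux_unit_right (f : (H ⊗[k] H) →ₗ[k] H) (u v : H ⊗[k] H) :
    μ (TensorProduct.map f (ueps k H) (ttc k H (u ⊗ₜ[k] v)))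
      = f ((Xr k H u) ⊗ₜ[k] (Xr k H v)) := by
  induction u with
  | zero => simp
  | tmul x y =>
    induction v with
    | zero => simp
    | tmul z w =>
      simp [ueps_tmul, counit_mul' k H, smul_tmul, tmul_smul, smul_smul, Algebra.mul_smul_comm,
        mul_comm]
    | add s t hs ht => simp only [tmul_add, map_add, hs, ht]
  | add s t hs ht => simp only [add_tmul, map_add, hs, ht, smul_tmul, tmul_add, add_tmul]

lemma aux_unit_left (f : (H ⊗[k] H) →ₗ[k] H) (u v : H ⊗[k] H) :
    μ (TensorProduct.map (ueps k H) f (ttc k H (u ⊗ₜ[k] v)))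
      = f ((Xl k H u) ⊗ₜ[k] (Xl k H v)) := by
  induction u with
  | zero => simp
  | tmul x y =>
    induction v with
    | zero => simp
    | tmul z w =>
      simp [ueps_tmul, counit_mul' k H, smul_tmul, tmul_smul, smul_smul, Algebra.smul_mul_assoc,
        mul_comm]
    | add s t hs ht => simp only [tmul_add, map_add, hs, ht]
  | add s t hs ht => simp only [add_tmul, map_add, hs, ht, smul_tmul, tmul_add, add_tmul]

lemma conv_unit_right (f : (H ⊗[k] H) →ₗ[k] H) : conv k H f (ueps k H) = f := by
  apply TensorProduct.ext'
  intro a b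
  simp only [conv, LinearMap.comp_apply, comul2_tmul]
  rw [aux_unit_right]
  have ha : Xr k H (Δ a) = a := by
    simp [Xr, Coalgebra.lTensor_counit_comul (R := k) a]
  have hb : Xr k H (Δ b) = b := by
    simp [Xr, Coalgebra.lTensor_counit_comul (R := k) b]
  rw [ha, hb]

lemma conv_unit_left (f : (H ⊗[k] H) →ₗ[k] H) : conv k H (ueps k H) f = f := by
  apply TensorProduct.ext'
  intro a b
  simp only [conv, LinearMap.comp_apply, comul2_tmul]
  rw [aux_unit_left]
  have ha : Xl k H (Δ a) = a := by
    simp [Xl, Coalgebra.rTensor_counit_comul (R := k) a]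
  have hb : Xl k H (Δ b) = b := by
    simp [Xl, Coalgebra.rTensor_counit_comul (R := k) b]
  rw [ha, hb]

section Assoc

def Perm : ((H ⊗[k] (H ⊗[k] H)) ⊗[k] (H ⊗[k] (H ⊗[k] H))) →ₗ[k]
    ((H ⊗[k] H) ⊗[k] ((H ⊗[k] H) ⊗[k] (H ⊗[k] H))) :=
  (TensorProduct.map LinearMap.id (ttc k H)) ∘ₗ
    (TensorProduct.tensorTensorTensorComm k H (H ⊗[k] H) H (H ⊗[k] H)).toLinearMap

@[simp] lemma Perm_tmul (x₁ x₂ x₃ y₁ y₂ y₃ : H) :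
    Perm k H ((x₁ ⊗ₜ[k] (x₂ ⊗ₜ[k] x₃)) ⊗ₜ[k] (y₁ ⊗ₜ[k] (y₂ ⊗ₜ[k] y₃)))
      = (x₁ ⊗ₜ[k] y₁) ⊗ₜ[k] ((x₂ ⊗ₜ[k] y₂) ⊗ₜ[k] (x₃ ⊗ₜ[k] y₃)) := rfl

def assocT : (((H ⊗[k] H) ⊗[k] (H ⊗[k] H)) ⊗[k] (H ⊗[k] H)) →ₗ[k]
    ((H ⊗[k] H) ⊗[k] ((H ⊗[k] H) ⊗[k] (H ⊗[k] H))) :=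
  (TensorProduct.assoc k (H ⊗[k] H) (H ⊗[k] H) (H ⊗[k] H)).toLinearMap

@[simp] lemma assocT_tmul (u v w : H ⊗[k] H) :
    assocT k H ((u ⊗ₜ[k] v) ⊗ₜ[k] w) = u ⊗ₜ[k] (v ⊗ₜ[k] w) := rfl

def assocH : ((H ⊗[k] H) ⊗[k] H) →ₗ[k] (H ⊗[k] (H ⊗[k] H)) :=
  (TensorProduct.assoc k H H H).toLinearMap

@[simp] lemma assocH_tmul (u v w : H) :
    assocH k H ((u ⊗ₜ[k] v) ⊗ₜ[k] w) = u ⊗ₜ[k] (v ⊗ₜ[k] w) := rfl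

lemma auxR'' (p q : H ⊗[k] H) (c d : H) :
    assocT k H ((ttc k H (p ⊗ₜ[k] q)) ⊗ₜ[k] (c ⊗ₜ[k] d))
      = Perm k H ((assocH k H (p ⊗ₜ[k] c)) ⊗ₜ[k] (assocH k H (q ⊗ₜ[k] d))) := by
  induction p with
  | zero => simp
  | tmul x₁ x₂ =>
    induction q with
    | zero => simp
    | tmul y₁ y₂ => simp
    | add s t hs ht => simp only [tmul_add, add_tmul, map_add, hs, ht]
  | add s t hs ht => simp only [tmul_add, add_tmul, map_add, hs, ht]

lemma auxL'' (c d : H) (p q : H ⊗[k] H) :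
    ((c ⊗ₜ[k] d) ⊗ₜ[k] (ttc k H (p ⊗ₜ[k] q)))
      = Perm k H ((c ⊗ₜ[k] p) ⊗ₜ[k] (d ⊗ₜ[k] q)) := by
  induction p with
  | zero => simp
  | tmul x₂ x₃ =>
    induction q with
    | zero => simp
    | tmul y₂ y₃ => simp
    | add s t hs ht => simp only [tmul_add, add_tmul, map_add, hs, ht]
  | add s t hs ht => simp only [tmul_add, add_tmul, map_add, hs, ht]

lemma auxR (u v : H ⊗[k] H) :
    assocT k H ((comul2 k H).rTensor _ (ttc k H (u ⊗ₜ[k] v)))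
      = Perm k H ((assocH k H ((Δ).rTensor H u)) ⊗ₜ[k] (assocH k H ((Δ).rTensor H v))) := by
  induction u with
  | zero => simp
  | tmul a₁ a₂ =>
    induction v with
    | zero => simp
    | tmul b₁ b₂ =>
      have : (comul2 k H).rTensor _ (((a₁ ⊗ₜ[k] b₁) ⊗ₜ[k] (a₂ ⊗ₜ[k] b₂)) :
          (H ⊗[k] H) ⊗[k] (H ⊗[k] H)) = (ttc k H ((Δ a₁) ⊗ₜ[k] (Δ b₁))) ⊗ₜ[k] (a₂ ⊗ₜ[k] b₂) := by
        simp [LinearMap.rTensor_tmul, comul2_tmul]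
      rw [ttc_tmul, this, auxR'']
      simp [LinearMap.rTensor_tmul]
    | add s t hs ht => simp only [tmul_add, add_tmul, map_add, hs, ht]
  | add s t hs ht => simp only [tmul_add, add_tmul, map_add, hs, ht]

lemma auxL (u v : H ⊗[k] H) :
    (comul2 k H).lTensor _ (ttc k H (u ⊗ₜ[k] v))
      = Perm k H (((Δ).lTensor H u) ⊗ₜ[k] ((Δ).lTensor H v)) := by
  induction u with
  | zero => simp
  | tmul a₁ a₂ =>
    induction v with
    | zero => simp
    | tmul b₁ b₂ =>
      have : (comul2 k H).lTensor _ (((a₁ ⊗ₜ[k] b₁) ⊗ₜ[k] (a₂ ⊗ₜ[k] b₂)) :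
          (H ⊗[k] H) ⊗[k] (H ⊗[k] H)) = (a₁ ⊗ₜ[k] b₁) ⊗ₜ[k] (ttc k H ((Δ a₂) ⊗ₜ[k] (Δ b₂))) := by
        simp [LinearMap.lTensor_tmul, comul2_tmul]
      rw [ttc_tmul, this, auxL'' k H a₁ b₁ (Δ a₂) (Δ b₂)]
      simp [LinearMap.lTensor_tmul]
    | add s t hs ht => simp only [tmul_add, add_tmul, map_add, hs, ht]
  | add s t hs ht => simp only [tmul_add, add_tmul, map_add, hs, ht]

lemma coassoc2 (t : H ⊗[k] H) :
    assocT k H ((comul2 k H).rTensor _ (comul2 k H t))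
      = (comul2 k H).lTensor _ (comul2 k H t) := by
  induction t with
  | zero => simp
  | tmul a b =>
    have hco : ∀ c : H, assocH k H ((Δ).rTensor H (Δ c)) = (Δ).lTensor H (Δ c) := fun c =>
      Coalgebra.coassoc_apply c
    rw [comul2_tmul, auxR, hco, hco, ← auxL]
  | add s t hs ht => simp only [map_add, hs, ht]

variable {k H}

def Xi1 (f g h : (H ⊗[k] H) →ₗ[k] H) :
    (((H ⊗[k] H) ⊗[k] (H ⊗[k] H)) ⊗[k] (H ⊗[k] H)) →ₗ[k] H :=
  μ ∘ₗ TensorProduct.map (μ ∘ₗ TensorProduct.map f g) h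

def Xi2 (f g h : (H ⊗[k] H) →ₗ[k] H) :
    ((H ⊗[k] H) ⊗[k] ((H ⊗[k] H) ⊗[k] (H ⊗[k] H))) →ₗ[k] H :=
  μ ∘ₗ TensorProduct.map f (μ ∘ₗ TensorProduct.map g h)

lemma xi_assoc (f g h : (H ⊗[k] H) →ₗ[k] H)
    (z : ((H ⊗[k] H) ⊗[k] (H ⊗[k] H)) ⊗[k] (H ⊗[k] H)) :
    Xi2 f g h (assocT k H z) = Xi1 f g h z := by
  induction z with
  | zero => simp
  | tmul y w =>
    induction y with
    | zero => simp
    | tmul u v => simp [Xi1, Xi2, mul_assoc]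
    | add s t hs ht => simp only [add_tmul, map_add, hs, ht]
  | add s t hs ht => simp only [map_add, hs, ht]

lemma conv_assoc (f g h : (H ⊗[k] H) →ₗ[k] H) :
    conv k H (conv k H f g) h = conv k H f (conv k H g h) := by
  have e1 : TensorProduct.map (μ ∘ₗ TensorProduct.map f g ∘ₗ comul2 k H) h
      = (TensorProduct.map (μ ∘ₗ TensorProduct.map f g) h) ∘ₗ (comul2 k H).rTensor _ := by
    rw [LinearMap.rTensor, ← TensorProduct.map_comp, LinearMap.comp_id]
    rfl
  have e2 : TensorProduct.map f (μ ∘ₗ TensorProduct.map g h ∘ₗ comul2 k H)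
      = (TensorProduct.map f (μ ∘ₗ TensorProduct.map g h)) ∘ₗ (comul2 k H).lTensor _ := by
    rw [LinearMap.lTensor, ← TensorProduct.map_comp, LinearMap.comp_id]
    rfl
  apply LinearMap.ext
  intro t
  have l1 : conv k H (conv k H f g) h t
      = Xi1 f g h ((comul2 k H).rTensor _ (comul2 k H t)) := by
    simp only [conv, Xi1, LinearMap.comp_apply, e1]
  have l2 : conv k H f (conv k H g h) t
      = Xi2 f g h ((comul2 k H).lTensor _ (comul2 k H t)) := by
    simp only [conv, Xi2, LinearMap.comp_apply, e2]
  rw [l1, l2, ← coassoc2, xi_assoc]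

end Assoc

theorem antipode_one' : Sₐ (1 : H) = 1 := by
  have h := HopfAlgebra.mul_antipode_rTensor_comul_apply (R := k) (1 : H)
  rw [Bialgebra.comul_one, Algebra.TensorProduct.one_def, Bialgebra.counit_one] at h
  simpa using h

theorem antipode_mul' (a b : H) : Sₐ (a * b) = Sₐ b * Sₐ a := by
  have key : Sₐ ∘ₗ μ = Grev k H := by
    calc Sₐ ∘ₗ μ = conv k H (Sₐ ∘ₗ μ) (ueps k H) := (conv_unit_right k H _).symm
    _ = conv k H (Sₐ ∘ₗ μ) (conv k H μ (Grev k H)) := by rw [conv_mul_Grev]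
    _ = conv k H (conv k H (Sₐ ∘ₗ μ) μ) (Grev k H) := (conv_assoc _ _ _).symm
    _ = conv k H (ueps k H) (Grev k H) := by rw [conv_SmulS_mul]
    _ = Grev k H := conv_unit_left k H _
  have := LinearMap.congr_fun key (a ⊗ₜ[k] b)
  simpa using this


section QTpart

local notation "T" => H ⊗[k] H

def SId : (H ⊗[k] H) →ₗ[k] (H ⊗[k] H) := (HopfAlgebra.antipode k : H →ₗ[k] H).rTensor H
def IdS : (H ⊗[k] H) →ₗ[k] (H ⊗[k] H) := (HopfAlgebra.antipode k : H →ₗ[k] H).lTensor H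

@[simp] lemma SId_tmul (a b : H) : SId k H (a ⊗ₜ[k] b) = (Sₐ a) ⊗ₜ[k] b := rfl
@[simp] lemma IdS_tmul (a b : H) : IdS k H (a ⊗ₜ[k] b) = a ⊗ₜ[k] (Sₐ b) := rfl

/-- `a⊗(b⊗c) ↦ a·S(b) ⊗ c` -/
def F2 : (H ⊗[k] (H ⊗[k] H)) →ₗ[k] (H ⊗[k] H) :=
  ((μ ∘ₗ (HopfAlgebra.antipode k : H →ₗ[k] H).lTensor H).rTensor H)
    ∘ₗ (TensorProduct.assoc k H H H).symm.toLinearMap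

@[simp] lemma F2_tmul (a b c : H) : F2 k H (a ⊗ₜ[k] (b ⊗ₜ[k] c)) = (a * Sₐ b) ⊗ₜ[k] c := rfl

/-- `a⊗(b⊗c) ↦ a ⊗ b·S(c)` -/
def G2 : (H ⊗[k] (H ⊗[k] H)) →ₗ[k] (H ⊗[k] H) :=
  (μ ∘ₗ (HopfAlgebra.antipode k : H →ₗ[k] H).lTensor H).lTensor H

@[simp] lemma G2_tmul (a b c : H) : G2 k H (a ⊗ₜ[k] (b ⊗ₜ[k] c)) = a ⊗ₜ[k] (b * Sₐ c) := rfl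

/-- `(S ⊗ S)` on `H ⊗ H` -/
def SSm : (H ⊗[k] H) →ₗ[k] (H ⊗[k] H) :=
  TensorProduct.map (HopfAlgebra.antipode k : H →ₗ[k] H) (HopfAlgebra.antipode k : H →ₗ[k] H)

/-- `Phi w y = Σ y₁w₁ ⊗ w₂y₂` -/
def Phi (w y : H ⊗[k] H) : H ⊗[k] H :=
  (TensorProduct.map μ μ)
    (((TensorProduct.comm k H H).toLinearMap.rTensor (H ⊗[k] H)) (ttc k H (w ⊗ₜ[k] y)))

@[simp] lemma Phi_tmul (a b c d : H) :
    Phi k H (a ⊗ₜ[k] b) (c ⊗ₜ[k] d) = (c * a) ⊗ₜ[k] (b * d) := rfl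

@[simp] lemma Phi_zero_left (y : T) : Phi k H 0 y = 0 := by simp [Phi, zero_tmul]
@[simp] lemma Phi_zero_right (w : T) : Phi k H w 0 = 0 := by simp [Phi, tmul_zero]
lemma Phi_add_left (w w' y : T) : Phi k H (w + w') y = Phi k H w y + Phi k H w' y := by
  simp [Phi, add_tmul]
lemma Phi_add_right (w y y' : T) : Phi k H w (y + y') = Phi k H w y + Phi k H w y' := by
  simp [Phi, tmul_add]
lemma Phi_neg_right (w y : T) : Phi k H w (-y) = -Phi k H w y := by
  simp [Phi, tmul_neg]

/-- (ε⊗id) as an algebra hom -/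
def XlA : (H ⊗[k] H) →ₐ[k] H :=
  (Algebra.TensorProduct.lid k H).toAlgHom.comp
    (Algebra.TensorProduct.map (Bialgebra.counitAlgHom k H) (AlgHom.id k H))

/-- (id⊗ε) as an algebra hom -/
def XrA : (H ⊗[k] H) →ₐ[k] H :=
  (Algebra.TensorProduct.rid k k H).toAlgHom.comp
    (Algebra.TensorProduct.map (AlgHom.id k H) (Bialgebra.counitAlgHom k H))

lemma XlA_eq (t : T) : XlA k H t = Xl k H t := by
  induction t with
  | zero => simp
  | tmul a b => simp [XlA]
  | add s t hs ht => simp only [map_add, hs, ht]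

lemma XrA_eq (t : T) : XrA k H t = Xr k H t := by
  induction t with
  | zero => simp
  | tmul a b => simp [XrA]
  | add s t hs ht => simp only [map_add, hs, ht]

/-- drop the first leg with ε, as an algebra hom -/
def E1 : (H ⊗[k] (H ⊗[k] H)) →ₐ[k] (H ⊗[k] H) :=
  (Algebra.TensorProduct.lid k (H ⊗[k] H)).toAlgHom.comp
    (Algebra.TensorProduct.map (Bialgebra.counitAlgHom k H) (AlgHom.id k (H ⊗[k] H)))

@[simp] lemma E1_tmul (a : H) (u : T) :
    E1 k H (a ⊗ₜ[k] u) = Coalgebra.counit (R := k) a • u := rfl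

/-- drop the third leg with ε, as an algebra hom -/
def E3 : (H ⊗[k] (H ⊗[k] H)) →ₐ[k] (H ⊗[k] H) :=
  Algebra.TensorProduct.map (AlgHom.id k H) (XrA k H)

lemma E1_leg23 (w : T) : E1 k H (leg23 k H w) = w := by
  have : leg23 k H w = (1:H) ⊗ₜ[k] w := Algebra.TensorProduct.includeRight_apply w
  rw [this, E1_tmul, Bialgebra.counit_one, one_smul]

lemma E1_leg13 (w : T) : E1 k H (leg13 k H w) = (1:H) ⊗ₜ[k] (Xl k H w) := by
  induction w with
  | zero => simp [leg13]
  | tmul a b => simp [leg13, tmul_smul, smul_tmul]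
  | add s t hs ht => simp only [map_add, hs, ht, tmul_add]

lemma E1_assoc_aux (u : T) (c : H) :
    E1 k H ((Algebra.TensorProduct.assoc k k k H H H) (u ⊗ₜ[k] c)) = (Xl k H u) ⊗ₜ[k] c := by
  induction u with
  | zero => simp
  | tmul a b => simp [Algebra.TensorProduct.assoc_tmul, smul_tmul]
  | add s t hs ht => simp only [add_tmul, map_add, hs, ht]

lemma E1_comulId (w : T) : E1 k H (comulId k H w) = w := by
  induction w with
  | zero => simp
  | tmul a b =>
    have h1 : comulId k H (a ⊗ₜ[k] b)
        = (Algebra.TensorProduct.assoc k k k H H H) ((Δ a) ⊗ₜ[k] b) := rfl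
    rw [h1, E1_assoc_aux]
    have h2 : Xl k H (Δ a) = a := by
      simp [Xl, Coalgebra.rTensor_counit_comul (R := k) a]
    rw [h2]
  | add s t hs ht => simp only [map_add, hs, ht]

lemma E3_leg12 (w : T) : E3 k H (leg12 k H w) = w := by
  induction w with
  | zero => simp [leg12]
  | tmul a b => simp [leg12, E3, XrA]
  | add s t hs ht => simp only [map_add, hs, ht]

lemma E3_leg13 (w : T) : E3 k H (leg13 k H w) = (Xr k H w) ⊗ₜ[k] (1:H) := by
  induction w with
  | zero => simp [leg13]
  | tmul a b => simp [leg13, E3, XrA, tmul_smul, smul_tmul]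
  | add s t hs ht => simp only [map_add, hs, ht, add_tmul]

lemma E3_idComul (w : T) : E3 k H (idComul k H w) = w := by
  induction w with
  | zero => simp
  | tmul a b =>
    have h1 : idComul k H (a ⊗ₜ[k] b) = a ⊗ₜ[k] (Δ b) := rfl
    rw [h1]
    have h2 : E3 k H (a ⊗ₜ[k] (Δ b)) = a ⊗ₜ[k] (XrA k H (Δ b)) := rfl
    rw [h2, XrA_eq]
    have h3 : Xr k H (Δ b) = b := by
      simp [Xr, Coalgebra.lTensor_counit_comul (R := k) b]
    rw [h3]
  | add s t hs ht => simp only [map_add, hs, ht]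

end QTpart

section Fpart

local notation "T" => H ⊗[k] H

lemma F2_comulId (w : T) : F2 k H (comulId k H w) = (1:H) ⊗ₜ[k] (Xl k H w) := by
  induction w with
  | zero => simp
  | tmul a b =>
    have h1 : comulId k H (a ⊗ₜ[k] b)
        = (Algebra.TensorProduct.assoc k k k H H H) ((Δ a) ⊗ₜ[k] b) := rfl
    have haux : ∀ (u : T) (c : H),
        F2 k H ((Algebra.TensorProduct.assoc k k k H H H) (u ⊗ₜ[k] c))
          = (μ ((HopfAlgebra.antipode k : H →ₗ[k] H).lTensor H u)) ⊗ₜ[k] c := by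
      intro u c
      induction u with
      | zero => simp
      | tmul x y => simp [Algebra.TensorProduct.assoc_tmul]
      | add s t hs ht => simp only [add_tmul, map_add, hs, ht]
    rw [h1, haux, HopfAlgebra.mul_antipode_lTensor_comul_apply]
    simp [Algebra.algebraMap_eq_smul_one, smul_tmul, Xl]
  | add s t hs ht => simp only [map_add, hs, ht, tmul_add]

lemma F2_leg23 (w : T) : F2 k H (leg23 k H w) = SId k H w := by
  induction w with
  | zero => simp [leg23]
  | tmul a b => simp [leg23]
  | add s t hs ht => simp only [map_add, hs, ht]

lemma F2_13_23 (u v : T) : F2 k H (leg13 k H u * leg23 k H v) = u * SId k H v := by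
  induction u with
  | zero => simp [mul_add, add_mul]
  | tmul a b =>
    induction v with
    | zero => simp
    | tmul c d =>
      simp [leg13, leg23, Algebra.TensorProduct.tmul_mul_tmul]
    | add s t hs ht => simp only [map_add, mul_add, hs, ht]
  | add s t hs ht => simp only [map_add, add_mul, hs, ht]

lemma F2_triple (u x v : T) :
    F2 k H (leg23 k H u * leg13 k H x * leg23 k H v)
      = Phi k H (SId k H u) (x * SId k H v) := by
  induction u with
  | zero => simp [add_mul, mul_add]
  | tmul u₁ u₂ =>
    induction x with
    | zero => simp [add_mul, mul_add]
    | tmul x₁ x₂ =>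
      induction v with
      | zero => simp
      | tmul v₁ v₂ =>
        simp [leg13, leg23, Algebra.TensorProduct.tmul_mul_tmul, antipode_mul', mul_assoc]
      | add s t hs ht =>
        simp only [map_add, mul_add, hs, ht, Phi_add_right]
    | add s t hs ht =>
      simp only [map_add, mul_add, add_mul, hs, ht, Phi_add_right]
  | add s t hs ht =>
    simp only [map_add, mul_add, add_mul, hs, ht, Phi_add_left]

lemma G2_idComul (w : T) : G2 k H (idComul k H w) = (Xr k H w) ⊗ₜ[k] (1:H) := by
  induction w with
  | zero => simp
  | tmul a b =>
    have h1 : idComul k H (a ⊗ₜ[k] b) = a ⊗ₜ[k] (Δ b) := rfl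
    have h2 : G2 k H (a ⊗ₜ[k] (Δ b))
        = a ⊗ₜ[k] (μ ((HopfAlgebra.antipode k : H →ₗ[k] H).lTensor H (Δ b))) := rfl
    rw [h1, h2, HopfAlgebra.mul_antipode_lTensor_comul_apply]
    simp [Algebra.algebraMap_eq_smul_one, tmul_smul, smul_tmul, Xr]
  | add s t hs ht => simp only [map_add, hs, ht, add_tmul]

lemma G2_leg12 (w : T) : G2 k H (leg12 k H w) = w := by
  induction w with
  | zero => simp [leg12]
  | tmul a b => simp [leg12, antipode_one' (k := k)]
  | add s t hs ht => simp only [map_add, hs, ht]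

lemma G2_12_13 (u v : T) : G2 k H (leg12 k H u * leg13 k H v) = u * IdS k H v := by
  induction u with
  | zero => simp [add_mul]
  | tmul a b =>
    induction v with
    | zero => simp
    | tmul c d =>
      simp [leg12, leg13, Algebra.TensorProduct.tmul_mul_tmul]
    | add s t hs ht => simp only [map_add, mul_add, hs, ht]
  | add s t hs ht => simp only [map_add, add_mul, hs, ht]

lemma G2_triple (u x v : T) :
    G2 k H (leg12 k H u * leg13 k H x * leg12 k H v)
      = u * Phi k H v (IdS k H x) := by
  induction u with
  | zero => simp [add_mul, mul_add]
  | tmul u₁ u₂ =>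
    induction x with
    | zero => simp [add_mul, mul_add]
    | tmul x₁ x₂ =>
      induction v with
      | zero => simp
      | tmul v₁ v₂ =>
        simp [leg12, leg13, Algebra.TensorProduct.tmul_mul_tmul, mul_assoc]
      | add s t hs ht =>
        simp only [map_add, mul_add, add_mul, hs, ht, Phi_add_left]
    | add s t hs ht =>
      simp only [map_add, mul_add, add_mul, hs, ht, Phi_add_right]
  | add s t hs ht =>
    simp only [map_add, mul_add, add_mul, hs, ht]

lemma IdS_Phi (w y : T) :
    IdS k H (Phi k H w y) = IdS k H y * IdS k H w := by
  induction w with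
  | zero => simp
  | tmul a b =>
    induction y with
    | zero => simp
    | tmul c d =>
      simp [Algebra.TensorProduct.tmul_mul_tmul, antipode_mul']
    | add s t hs ht => simp only [Phi_add_right, map_add, add_mul, hs, ht]
  | add s t hs ht => simp only [Phi_add_left, map_add, mul_add, hs, ht]

lemma IdS_mul (u v : T) :
    IdS k H (u * v) = Phi k H (IdS k H v) (IdS k H u) := by
  induction u with
  | zero => simp
  | tmul a b =>
    induction v with
    | zero => simp
    | tmul c d =>
      simp [Algebra.TensorProduct.tmul_mul_tmul, antipode_mul']
    | add s t hs ht => simp only [map_add, mul_add, hs, ht, Phi_add_left]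
  | add s t hs ht => simp only [map_add, add_mul, hs, ht, Phi_add_right]

lemma SS_eq (t : T) : SSm k H t = IdS k H (SId k H t) := by
  induction t with
  | zero => simp
  | tmul a b => simp [SSm]
  | add s t hs ht => simp only [map_add, hs, ht]

lemma SS_mul (u v : T) : SSm k H (u * v) = SSm k H v * SSm k H u := by
  induction u with
  | zero => simp
  | tmul a b =>
    induction v with
    | zero => simp
    | tmul c d =>
      simp [SSm, Algebra.TensorProduct.tmul_mul_tmul, antipode_mul']
    | add s t hs ht => simp only [map_add, mul_add, add_mul, hs, ht]
  | add s t hs ht => simp only [map_add, mul_add, add_mul, hs, ht]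

lemma SS_one : SSm k H (1 : T) = 1 := by
  rw [Algebra.TensorProduct.one_def]
  simp [SSm, antipode_one' (k := k)]

lemma swapT_eq (t : T) : swapT k H t = TensorProduct.comm k H H t := rfl

lemma swapT_swapT (t : T) : swapT k H (swapT k H t) = t := by
  induction t with
  | zero => simp
  | tmul a b => rfl
  | add s t hs ht => simp only [map_add, hs, ht]

end Fpart

section Main

variable {k H}
variable (P : PreCartier k H)

local notation "T" => H ⊗[k] H

lemma Xl_R : Xl k H P.R = 1 := by
  have h := congrArg (E1 k H) P.hex2
  rw [E1_comulId, map_mul, E1_leg13, E1_leg23] at h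
  have h2 : (1:T) = (1:H) ⊗ₜ[k] (Xl k H P.R) := by
    calc (1:T) = P.R * P.Rinv := P.mul_inv.symm
    _ = ((1:H) ⊗ₜ[k] (Xl k H P.R) * P.R) * P.Rinv := by rw [← h]
    _ = (1:H) ⊗ₜ[k] (Xl k H P.R) * (P.R * P.Rinv) := by rw [mul_assoc]
    _ = (1:H) ⊗ₜ[k] (Xl k H P.R) := by rw [P.mul_inv, mul_one]
  have h3 := congrArg (Xl k H) h2
  rw [Algebra.TensorProduct.one_def] at h3
  simpa [Xl] using h3.symm

lemma Xr_R : Xr k H P.R = 1 := by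
  have h := congrArg (E3 k H) P.hex1
  rw [E3_idComul, map_mul, E3_leg13, E3_leg12] at h
  have h2 : (1:T) = (Xr k H P.R) ⊗ₜ[k] (1:H) := by
    calc (1:T) = P.R * P.Rinv := P.mul_inv.symm
    _ = ((Xr k H P.R) ⊗ₜ[k] (1:H) * P.R) * P.Rinv := by rw [← h]
    _ = (Xr k H P.R) ⊗ₜ[k] (1:H) * (P.R * P.Rinv) := by rw [mul_assoc]
    _ = (Xr k H P.R) ⊗ₜ[k] (1:H) := by rw [P.mul_inv, mul_one]
  have h3 := congrArg (Xr k H) h2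
  rw [Algebra.TensorProduct.one_def] at h3
  simpa [Xr] using h3.symm

lemma Xl_Rinv : Xl k H P.Rinv = 1 := by
  have h : XlA k H P.R * XlA k H P.Rinv = 1 := by rw [← map_mul, P.mul_inv, map_one]
  rw [XlA_eq, XlA_eq, Xl_R, one_mul] at h
  exact h

lemma Xr_Rinv : Xr k H P.Rinv = 1 := by
  have h : XrA k H P.R * XrA k H P.Rinv = 1 := by rw [← map_mul, P.mul_inv, map_one]
  rw [XrA_eq, XrA_eq, Xr_R, one_mul] at h
  exact h

lemma hex1_inv : idComul k H P.Rinv = leg12 k H P.Rinv * leg13 k H P.Rinv := by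
  have a1 : idComul k H P.R * idComul k H P.Rinv = 1 := by
    rw [← map_mul, P.mul_inv, map_one]
  have a2 : (leg12 k H P.Rinv * leg13 k H P.Rinv) * (leg13 k H P.R * leg12 k H P.R) = 1 := by
    calc (leg12 k H P.Rinv * leg13 k H P.Rinv) * (leg13 k H P.R * leg12 k H P.R)
        = leg12 k H P.Rinv * ((leg13 k H P.Rinv * leg13 k H P.R) * leg12 k H P.R) := by
          simp only [mul_assoc]
    _ = leg12 k H P.Rinv * ((leg13 k H (P.Rinv * P.R)) * leg12 k H P.R) := by rw [map_mul]
    _ = leg12 k H P.Rinv * leg12 k H P.R := by rw [P.inv_mul, map_one, one_mul]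
    _ = leg12 k H (P.Rinv * P.R) := by rw [map_mul]
    _ = 1 := by rw [P.inv_mul, map_one]
  calc idComul k H P.Rinv = 1 * idComul k H P.Rinv := (one_mul _).symm
  _ = ((leg12 k H P.Rinv * leg13 k H P.Rinv) * (leg13 k H P.R * leg12 k H P.R))
        * idComul k H P.Rinv := by rw [a2]
  _ = (leg12 k H P.Rinv * leg13 k H P.Rinv) * (idComul k H P.R * idComul k H P.Rinv) := by
        rw [← P.hex1]
        simp only [mul_assoc]
  _ = leg12 k H P.Rinv * leg13 k H P.Rinv := by rw [a1, mul_one]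

lemma SId_R : SId k H P.R = P.Rinv := by
  have h := congrArg (F2 k H) P.hex2
  rw [F2_comulId, F2_13_23, Xl_R] at h
  have h2 : P.R * SId k H P.R = 1 := by rw [← h, Algebra.TensorProduct.one_def]
  calc SId k H P.R = (P.Rinv * P.R) * SId k H P.R := by rw [P.inv_mul, one_mul]
  _ = P.Rinv * (P.R * SId k H P.R) := mul_assoc _ _ _
  _ = P.Rinv := by rw [h2, mul_one]

lemma IdS_Rinv : IdS k H P.Rinv = P.R := by
  have h := congrArg (G2 k H) (hex1_inv P)
  rw [G2_idComul, G2_12_13, Xr_Rinv] at h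
  have h2 : P.Rinv * IdS k H P.Rinv = 1 := by rw [← h, Algebra.TensorProduct.one_def]
  calc IdS k H P.Rinv = (P.R * P.Rinv) * IdS k H P.Rinv := by rw [P.mul_inv, one_mul]
  _ = P.R * (P.Rinv * IdS k H P.Rinv) := mul_assoc _ _ _
  _ = P.R := by rw [h2, mul_one]

lemma SS_R : SSm k H P.R = P.R := by
  rw [SS_eq, SId_R, IdS_Rinv]

lemma SS_Rinv : SSm k H P.Rinv = P.Rinv := by
  have h : SSm k H (P.Rinv * P.R) = 1 := by rw [P.inv_mul, SS_one]
  rw [SS_mul, SS_R] at h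
  calc SSm k H P.Rinv = (P.Rinv * P.R) * SSm k H P.Rinv := by rw [P.inv_mul, one_mul]
  _ = P.Rinv * (P.R * SSm k H P.Rinv) := mul_assoc _ _ _
  _ = P.Rinv := by rw [h, mul_one]

lemma Xl_chi : Xl k H P.χ = 0 := by
  have h := congrArg (E1 k H) P.chi_hex2
  rw [E1_comulId, map_add, E1_leg23, map_mul, map_mul, E1_leg23, E1_leg23, E1_leg13] at h
  have h2 : P.Rinv * ((1:H) ⊗ₜ[k] (Xl k H P.χ)) * P.R = 0 := by
    have := left_eq_add.mp h
    exact this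
  have h3 : (1:H) ⊗ₜ[k] (Xl k H P.χ) = (0 : T) := by
    calc (1:H) ⊗ₜ[k] (Xl k H P.χ)
        = ((P.R * P.Rinv) * ((1:H) ⊗ₜ[k] (Xl k H P.χ))) * (P.R * P.Rinv) := by
          rw [P.mul_inv, one_mul, mul_one]
    _ = P.R * ((P.Rinv * ((1:H) ⊗ₜ[k] (Xl k H P.χ)) * P.R) * P.Rinv) := by
          simp only [mul_assoc]
    _ = 0 := by rw [h2, zero_mul, mul_zero]
  have h4 := congrArg (Xl k H) h3
  simpa [Xl] using h4

lemma Xr_chi : Xr k H P.χ = 0 := by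
  have h := congrArg (E3 k H) P.chi_hex1
  rw [E3_idComul, map_add, E3_leg12, map_mul, map_mul, E3_leg12, E3_leg12, E3_leg13] at h
  have h2 : P.Rinv * ((Xr k H P.χ) ⊗ₜ[k] (1:H)) * P.R = 0 := by
    have := left_eq_add.mp h
    exact this
  have h3 : (Xr k H P.χ) ⊗ₜ[k] (1:H) = (0 : T) := by
    calc (Xr k H P.χ) ⊗ₜ[k] (1:H)
        = ((P.R * P.Rinv) * ((Xr k H P.χ) ⊗ₜ[k] (1:H))) * (P.R * P.Rinv) := by
          rw [P.mul_inv, one_mul, mul_one]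
    _ = P.R * ((P.Rinv * ((Xr k H P.χ) ⊗ₜ[k] (1:H)) * P.R) * P.Rinv) := by
          simp only [mul_assoc]
    _ = 0 := by rw [h2, zero_mul, mul_zero]
  have h4 := congrArg (Xr k H) h3
  simpa [Xr] using h4

lemma SId_chi :
    SId k H P.χ = - Phi k H (SId k H P.Rinv) (P.χ * P.Rinv) := by
  have h := congrArg (F2 k H) P.chi_hex2
  rw [F2_comulId, Xl_chi, tmul_zero, map_add, F2_leg23, F2_triple, SId_R] at h
  exact eq_neg_of_add_eq_zero_left h.symm

lemma PhiR_IdS_chi : Phi k H P.R (IdS k H P.χ) = -(P.R * P.χ) := by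
  have h := congrArg (G2 k H) P.chi_hex1
  rw [G2_idComul, Xr_chi, zero_tmul, map_add, G2_leg12, G2_triple] at h
  have h2 : P.Rinv * Phi k H P.R (IdS k H P.χ) = -P.χ :=
    eq_neg_of_add_eq_zero_right h.symm
  calc Phi k H P.R (IdS k H P.χ)
      = (P.R * P.Rinv) * Phi k H P.R (IdS k H P.χ) := by rw [P.mul_inv, one_mul]
  _ = P.R * (P.Rinv * Phi k H P.R (IdS k H P.χ)) := mul_assoc _ _ _
  _ = P.R * (-P.χ) := by rw [h2]
  _ = -(P.R * P.χ) := by rw [mul_neg]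

lemma final_SS_chi : SSm k H P.χ = P.R * P.χ * P.Rinv := by
  have e1 : IdS k H (SId k H P.Rinv) = P.Rinv := by
    rw [← SS_eq]; exact SS_Rinv P
  have e2 : IdS k H (P.χ * P.Rinv) = -(P.R * P.χ) := by
    rw [IdS_mul, IdS_Rinv, PhiR_IdS_chi]
  calc SSm k H P.χ = IdS k H (SId k H P.χ) := SS_eq k H P.χ
  _ = IdS k H (- Phi k H (SId k H P.Rinv) (P.χ * P.Rinv)) := by rw [SId_chi]
  _ = - IdS k H (Phi k H (SId k H P.Rinv) (P.χ * P.Rinv)) := map_neg _ _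
  _ = - (IdS k H (P.χ * P.Rinv) * IdS k H (SId k H P.Rinv)) := by rw [IdS_Phi]
  _ = - (-(P.R * P.χ) * P.Rinv) := by rw [e1, e2]
  _ = P.R * P.χ * P.Rinv := by rw [neg_mul, neg_neg]

end Main

end CartierAux

/-- for a Cartier triangular Hopf algebra `(H,R,χ)`,
`τ(S⊗S)(χ) = χ`. -/
theorem cartier_triangular_SS_chi (P : PreCartier k H)
    (htri : P.Rinv = swapT k H P.R)
    (hCartier : P.R * P.χ = swapT k H P.χ * P.R) :
    TensorProduct.comm k H H
      (TensorProduct.map (HopfAlgebra.antipode k : H →ₗ[k] H)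
        (HopfAlgebra.antipode k : H →ₗ[k] H) P.χ) = P.χ := by
  have hSS := CartierAux.final_SS_chi P
  have hswapchi : swapT k H P.χ = P.R * P.χ * P.Rinv := by
    calc swapT k H P.χ = swapT k H P.χ * (P.R * P.Rinv) := by rw [P.mul_inv, mul_one]
    _ = (swapT k H P.χ * P.R) * P.Rinv := (mul_assoc _ _ _).symm
    _ = P.R * P.χ * P.Rinv := by rw [← hCartier]
  have hsR : swapT k H P.R = P.Rinv := htri.symm
  have hsRinv : swapT k H P.Rinv = P.R := by rw [htri, CartierAux.swapT_swapT]
  show TensorProduct.comm k H H (CartierAux.SSm k H P.χ) = P.χ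
  calc TensorProduct.comm k H H (CartierAux.SSm k H P.χ)
      = swapT k H (CartierAux.SSm k H P.χ) := (CartierAux.swapT_eq k H _).symm
  _ = swapT k H (P.R * P.χ * P.Rinv) := by rw [hSS]
  _ = swapT k H P.R * swapT k H P.χ * swapT k H P.Rinv := by
        rw [map_mul, map_mul]
  _ = P.Rinv * (P.R * P.χ * P.Rinv) * P.R := by rw [hsR, hsRinv, hswapchi]
  _ = ((P.Rinv * P.R) * P.χ) * (P.Rinv * P.R) := by
        simp only [mul_assoc]
  _ = P.χ := by rw [P.inv_mul, one_mul, mul_one]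

end
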